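/- Let x ∈ F_{q^m}^n be a vector with pairwise distinct entries (a support) and y ∈ F_{q^m}^n a vector with all nonzero entries (a multiplier), and let k ≤ n. Then the dual of GRS_k(x,y) is GRS_{n-k}(x, y^⊥), where y^⊥_i = 1/(π'_x(x_i) y_i) and π_x(z) = ∏_{j=1}^n (z - x_j). -/

import Mathlib

open Polynomial

/-- The generalised Reed–Solomon code with support `x` and multiplier `y`, of dimension `k`:
evaluations of polynomials of degree `< k`, scaled by `y`. -/
def GRSset (L : Type*) [Field L] {ι : Type*} (k : ℕ) (x y : ι → L) : Set (ι → L) :=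
  {v | ∃ f ∈ Polynomial.degreeLT L k, v = fun i => y i * Polynomial.eval (x i) f}

/-- The dual of a set of words, with respect to the standard bilinear form. -/
def dualSet (F : Type*) [Field F] {ι : Type*} [Fintype ι] (S : Set (ι → F)) : Set (ι → F) :=
  {u | ∀ c ∈ S, ∑ i, u i * c i = 0}

open Finset in
lemma nodal_univ_eq {L : Type*} [Field L] {n : ℕ} (x : Fin n → L) :
    Lagrange.nodal Finset.univ x = ∏ j, (X - Polynomial.C (x j)) :=
  Lagrange.nodal_eq _ _

open Finset in
lemma basis_eq_C_mul_nodal {L : Type*} [Field L] {n : ℕ} (x : Fin n → L) (i : Fin n) :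
    Lagrange.basis Finset.univ x i =
      Polynomial.C (Lagrange.nodalWeight Finset.univ x i) *
        Lagrange.nodal ((Finset.univ : Finset (Fin n)).erase i) x := by
  simp_rw [Lagrange.basis, Lagrange.basisDivisor, Lagrange.nodalWeight, Lagrange.nodal,
    Finset.prod_mul_distrib, map_prod]

open Finset in
lemma coeff_basis_top {L : Type*} [Field L] {n : ℕ} (x : Fin n → L) (i : Fin n) :
    (Lagrange.basis Finset.univ x i).coeff (n - 1) = Lagrange.nodalWeight Finset.univ x i := by
  have hcard : #((Finset.univ : Finset (Fin n)).erase i) = n - 1 := by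
    rw [Finset.card_erase_of_mem (Finset.mem_univ i)]; simp
  have hmonic : (Lagrange.nodal ((Finset.univ : Finset (Fin n)).erase i) x).Monic :=
    Lagrange.nodal_monic
  have hdeg : (Lagrange.nodal ((Finset.univ : Finset (Fin n)).erase i) x).natDegree = n - 1 := by
    rw [Lagrange.natDegree_nodal, hcard]
  rw [basis_eq_C_mul_nodal, Polynomial.coeff_C_mul, ← hdeg, hmonic.coeff_natDegree, mul_one]

open Finset in
/-- Key identity: for `h` of degree `< n`, `∑ᵢ h(xᵢ)/π'(xᵢ) = coeff h (n-1)`. -/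
lemma sum_eval_div_eq_coeff {L : Type*} [Field L] {n : ℕ} (x : Fin n → L)
    (hx : Function.Injective x) (h : L[X]) (hdeg : h.degree < (n : ℕ)) :
    ∑ i, Polynomial.eval (x i) h *
        (Polynomial.eval (x i) (Polynomial.derivative (∏ j, (X - Polynomial.C (x j)))))⁻¹
      = h.coeff (n - 1) := by
  have hs : Set.InjOn x (Finset.univ : Finset (Fin n)) := hx.injOn
  have hcard : #(Finset.univ : Finset (Fin n)) = n := by simp
  have hrepr := Lagrange.eq_interpolate (f := h) hs (by rwa [hcard])
  conv_rhs => rw [hrepr]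
  rw [Lagrange.interpolate_apply, Polynomial.finset_sum_coeff]
  refine Finset.sum_congr rfl fun i _ => ?_
  rw [Polynomial.coeff_C_mul, coeff_basis_top,
    Lagrange.nodalWeight_eq_eval_derivative_nodal (Finset.mem_univ i), nodal_univ_eq]

open Finset in
lemma eval_deriv_ne_zero {L : Type*} [Field L] {n : ℕ} (x : Fin n → L)
    (hx : Function.Injective x) (i : Fin n) :
    Polynomial.eval (x i) (Polynomial.derivative (∏ j, (X - Polynomial.C (x j)))) ≠ 0 := by
  have hs : Set.InjOn x (Finset.univ : Finset (Fin n)) := hx.injOn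
  have hne := Lagrange.nodalWeight_ne_zero hs (Finset.mem_univ i)
  rw [Lagrange.nodalWeight_eq_eval_derivative_nodal (Finset.mem_univ i), nodal_univ_eq] at hne
  intro h0
  rw [h0] at hne
  simp at hne

/-- The dual of `GRS_k(x, y)` is `GRS_{n-k}(x, y^⊥)` with
`y^⊥ i = 1 / (π'_x(x_i) * y_i)` where `π_x = ∏ (z - x_j)`. -/
theorem dual_GRS {L : Type*} [Field L] {n k : ℕ} (x y : Fin n → L)
    (hx : Function.Injective x) (hy : ∀ i, y i ≠ 0) (hk : k ≤ n) :
    dualSet L (GRSset L k x y) =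
      GRSset L (n - k) x (fun i =>
        (Polynomial.eval (x i)
            (Polynomial.derivative (∏ j, (X - Polynomial.C (x j)))) * y i)⁻¹) := by
  classical
  set π : L[X] := ∏ j, (X - Polynomial.C (x j)) with hπ
  have hs : Set.InjOn x (Finset.univ : Finset (Fin n)) := hx.injOn
  have hcard : (Finset.univ : Finset (Fin n)).card = n := by simp
  have hπ' : ∀ i, Polynomial.eval (x i) (Polynomial.derivative π) ≠ 0 :=
    eval_deriv_ne_zero x hx
  ext u
  constructor
  · -- dual ⊆ GRS(n-k)
    intro hu
    set g := Lagrange.interpolate Finset.univ x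
      (fun i => u i * (Polynomial.eval (x i) (Polynomial.derivative π) * y i)) with hgdef
    have hgval : ∀ i, Polynomial.eval (x i) g =
        u i * (Polynomial.eval (x i) (Polynomial.derivative π) * y i) := fun i =>
      Lagrange.eval_interpolate_at_node _ hs (Finset.mem_univ i)
    have hgdeg : g.degree < (n : ℕ) := by
      have := Lagrange.degree_interpolate_lt
        (fun i => u i * (Polynomial.eval (x i) (Polynomial.derivative π) * y i)) hs
      rwa [hcard] at this
    have key : ∀ t, t < k → g.coeff (n - 1 - t) = 0 := by
      intro t
      induction t using Nat.strong_induction_on with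
      | _ t ih =>
        intro htk
        have hdeg2 : (g * X ^ t).degree < ((n : ℕ) : WithBot ℕ) := by
          rw [Polynomial.degree_lt_iff_coeff_zero]
          intro m hm
          rw [Polynomial.coeff_mul_X_pow']
          split_ifs with hth
          · by_cases hmn : n ≤ m - t
            · exact Polynomial.coeff_eq_zero_of_degree_lt
                (lt_of_lt_of_le hgdeg (by exact_mod_cast hmn))
            · push_neg at hmn
              have hmn' : n ≤ m := hm
              have ht' : m - t = n - 1 - (n - 1 - (m - t)) := by omega
              rw [ht']
              exact ih (n - 1 - (m - t)) (by omega) (by omega)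
          · rfl
        have hL1 := sum_eval_div_eq_coeff x hx (g * X ^ t) hdeg2
        have hXt : (X ^ t : L[X]) ∈ Polynomial.degreeLT L k := by
          rw [Polynomial.mem_degreeLT, Polynomial.degree_X_pow]
          exact_mod_cast htk
        have hzero := hu (fun i => y i * Polynomial.eval (x i) (X ^ t : L[X])) ⟨X ^ t, hXt, rfl⟩
        have hsum : ∑ i, Polynomial.eval (x i) (g * X ^ t) *
            (Polynomial.eval (x i) (Polynomial.derivative π))⁻¹
            = ∑ i, u i * (y i * Polynomial.eval (x i) (X ^ t : L[X])) := by
          refine Finset.sum_congr rfl fun i _ => ?_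
          rw [Polynomial.eval_mul, hgval i]
          field_simp [hπ' i]
        rw [← hπ] at hL1
        have hcoeff : (g * X ^ t).coeff (n - 1) = g.coeff (n - 1 - t) := by
          rw [Polynomial.coeff_mul_X_pow']
          have : t ≤ n - 1 := by omega
          simp [this]
        rw [hsum, hzero, hcoeff] at hL1
        exact hL1.symm
    have hgdeg' : g.degree < ((n - k : ℕ) : WithBot ℕ) := by
      rw [Polynomial.degree_lt_iff_coeff_zero]
      intro m hm
      have hm' : n - k ≤ m := by exact_mod_cast hm
      by_cases hmn : n ≤ m
      · exact Polynomial.coeff_eq_zero_of_degree_lt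
          (lt_of_lt_of_le hgdeg (by exact_mod_cast hmn))
      · push_neg at hmn
        have hmeq : m = n - 1 - (n - 1 - m) := by omega
        rw [hmeq]
        exact key (n - 1 - m) (by omega)
    refine ⟨g, Polynomial.mem_degreeLT.mpr hgdeg', ?_⟩
    funext i
    rw [hgval i]
    have hne : Polynomial.eval (x i) (Polynomial.derivative π) * y i ≠ 0 :=
      mul_ne_zero (hπ' i) (hy i)
    field_simp
    rw [mul_assoc, mul_div_cancel_right₀ _ hne]
  · -- GRS(n-k) ⊆ dual
    rintro ⟨g, hg, rfl⟩ c ⟨f, hf, rfl⟩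
    rw [Polynomial.mem_degreeLT] at hg hf
    by_cases hg0 : g = 0
    · simp [hg0]
    by_cases hf0 : f = 0
    · simp [hf0]
    have hgk : g.natDegree < n - k := by
      rwa [← Polynomial.natDegree_lt_iff_degree_lt hg0] at hg
    have hfk : f.natDegree < k := by
      rwa [← Polynomial.natDegree_lt_iff_degree_lt hf0] at hf
    have hgf0 : g * f ≠ 0 := mul_ne_zero hg0 hf0
    have hnd : (g * f).natDegree < n - 1 := by
      have := Polynomial.natDegree_mul_le (p := g) (q := f)
      omega
    have hdeg : (g * f).degree < (n : ℕ) := by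
      rw [← Polynomial.natDegree_lt_iff_degree_lt hgf0]
      omega
    have hL1 := sum_eval_div_eq_coeff x hx (g * f) hdeg
    have hc : (g * f).coeff (n - 1) = 0 :=
      Polynomial.coeff_eq_zero_of_natDegree_lt hnd
    rw [hc] at hL1
    rw [← hL1]
    refine Finset.sum_congr rfl fun i _ => ?_
    rw [← hπ, Polynomial.eval_mul]
    have hne : Polynomial.eval (x i) (Polynomial.derivative π) ≠ 0 := hπ' i
    field_simp [hne, hy i]
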